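/- In the context of the cutting-plane model, suppose x^{k,ℓ} solves min m_{k,ℓ}(x) subject to x ∈ F and ‖x - x^k‖_∞ ≤ Δ_{k,ℓ}, where all constraints active at x^{k,ℓ} are retained in m_{k,ℓ+1}, only additional cuts (lower-bounding affine functions of Q) are added, and Δ_{k,ℓ+1} ≤ Δ_{k,ℓ}. Then m_{k,ℓ}(x^{k,ℓ}) ≤ m_{k,ℓ+1}(x^{k,ℓ+1}) where x^{k,ℓ+1} solves the next subproblem. -/

import Mathlib

open Finset

def dotp {n : ℕ} (g x : Fin n → ℝ) : ℝ := ∑ i, g i * x i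

open Topology Filter

lemma dotp_combo {n : ℕ} (g x y : Fin n → ℝ) (t : ℝ) :
    dotp g ((1-t)•x + t•y) = (1-t)*dotp g x + t*dotp g y := by
  simp only [dotp, Pi.add_apply, Pi.smul_apply, smul_eq_mul, Finset.mul_sum,
    ← Finset.sum_add_distrib]
  apply Finset.sum_congr rfl; intros; ring


/-- Monotonicity of cutting-plane model optimal values between minor
iterations (Lemma 3.1):  all cuts active at the current minor iterate are
retained, only cuts are added, and the trust radius shrinks.
Models have the form `c^T x + Σ_j max_{(a,b) ∈ cuts j} (a^T x + b)`.
Sup norm on `Fin n → ℝ`. -/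
theorem stmt8 {n T : ℕ}
    (c : Fin n → ℝ) (F : Set (Fin n → ℝ)) (hFpoly : ∃ (k : ℕ)
      (A : Matrix (Fin k) (Fin n) ℝ) (b : Fin k → ℝ),
      F = {x | A.mulVec x = b ∧ 0 ≤ x})
    (xk : Fin n → ℝ)
    (cuts1 cuts2 : Fin T → Finset ((Fin n → ℝ) × ℝ))
    (h1 : ∀ j, (cuts1 j).Nonempty) (h2 : ∀ j, (cuts2 j).Nonempty)
    (m1 m2 : (Fin n → ℝ) → ℝ)
    (hm1 : ∀ x, m1 x = dotp c x +
      ∑ j, (cuts1 j).sup' (h1 j) (fun ab => dotp ab.1 x + ab.2))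
    (hm2 : ∀ x, m2 x = dotp c x +
      ∑ j, (cuts2 j).sup' (h2 j) (fun ab => dotp ab.1 x + ab.2))
    (Δ1 Δ2 : ℝ) (hΔ : Δ2 ≤ Δ1)
    (x1 x2 : Fin n → ℝ)
    (hx1f : x1 ∈ F ∧ ‖x1 - xk‖ ≤ Δ1)
    (hx1 : IsMinOn m1 {x ∈ F | ‖x - xk‖ ≤ Δ1} x1)
    (hx2f : x2 ∈ F ∧ ‖x2 - xk‖ ≤ Δ2)
    (hx2 : IsMinOn m2 {x ∈ F | ‖x - xk‖ ≤ Δ2} x2)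
    (hactive : ∀ j, ∀ ab ∈ cuts1 j,
      dotp ab.1 x1 + ab.2 =
        (cuts1 j).sup' (h1 j) (fun ab => dotp ab.1 x1 + ab.2) →
      ab ∈ cuts2 j) :
    m1 x1 ≤ m2 x2 := by
  classical
  obtain ⟨hx1F, hx1n⟩ := hx1f
  obtain ⟨hx2F, hx2n⟩ := hx2f
  set M : Fin T → ℝ :=
    fun j => (cuts1 j).sup' (h1 j) (fun ab => dotp ab.1 x1 + ab.2) with hM
  set act : Fin T → Finset ((Fin n → ℝ) × ℝ) :=
    fun j => (cuts1 j).filter (fun ab => dotp ab.1 x1 + ab.2 = M j) with hact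
  have hane : ∀ j, (act j).Nonempty := by
    intro j
    obtain ⟨ab, hab, habv⟩ :=
      Finset.exists_mem_eq_sup' (h1 j) (fun ab => dotp ab.1 x1 + ab.2)
    exact ⟨ab, Finset.mem_filter.2 ⟨hab, habv.symm⟩⟩
  have hsub : ∀ j, act j ⊆ cuts1 j := fun j => Finset.filter_subset _ _
  set mh : (Fin n → ℝ) → ℝ :=
    fun x => dotp c x + ∑ j, (act j).sup' (hane j) (fun ab => dotp ab.1 x + ab.2)
    with hmh
  -- mh agrees with m1 at x1
  have hEq1 : mh x1 = m1 x1 := by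
    rw [hm1]
    show dotp c x1 + ∑ j, (act j).sup' (hane j) (fun ab => dotp ab.1 x1 + ab.2) = _
    congr 1
    apply Finset.sum_congr rfl
    intro j _
    apply le_antisymm
    · apply Finset.sup'_le
      intro ab hab
      exact Finset.le_sup' (fun ab => dotp ab.1 x1 + ab.2) (hsub j hab)
    · obtain ⟨ab, hab⟩ := hane j
      have hv : dotp ab.1 x1 + ab.2 = M j := (Finset.mem_filter.1 hab).2
      calc (cuts1 j).sup' (h1 j) (fun ab => dotp ab.1 x1 + ab.2) = M j := rfl
        _ = dotp ab.1 x1 + ab.2 := hv.symm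
        _ ≤ _ := Finset.le_sup' (fun ab => dotp ab.1 x1 + ab.2) hab
  -- mh ≤ m2 pointwise
  have hle2 : ∀ x, mh x ≤ m2 x := by
    intro x
    rw [hm2]
    show dotp c x + ∑ j, (act j).sup' (hane j) (fun ab => dotp ab.1 x + ab.2) ≤ _
    apply add_le_add_right
    apply Finset.sum_le_sum
    intro j _
    apply Finset.sup'_le
    intro ab hab
    obtain ⟨hab1, habv⟩ := Finset.mem_filter.1 hab
    exact Finset.le_sup' (fun ab => dotp ab.1 x + ab.2) (hactive j ab hab1 habv)
  -- the segment from x1 to x2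
  set y : ℝ → (Fin n → ℝ) := fun t => (1-t)•x1 + t•x2 with hy
  -- feasibility along the segment
  obtain ⟨k, A, b, hF⟩ := hFpoly
  rw [hF] at hx1F hx2F
  have hyS : ∀ t ∈ Set.Icc (0:ℝ) 1, y t ∈ {x ∈ F | ‖x - xk‖ ≤ Δ1} := by
    rintro t ⟨ht0, ht1⟩
    have h1t : (0:ℝ) ≤ 1 - t := by linarith
    refine ⟨?_, ?_⟩
    · rw [hF]
      refine ⟨?_, ?_⟩
      · rw [hy]
        simp only [Matrix.mulVec_add, Matrix.mulVec_smul, hx1F.1, hx2F.1]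
        funext i
        simp only [Pi.add_apply, Pi.smul_apply, smul_eq_mul]
        ring
      · intro i
        simp only [hy, Pi.add_apply, Pi.smul_apply, smul_eq_mul, Pi.zero_apply]
        have := hx1F.2 i
        have := hx2F.2 i
        simp only [Pi.zero_apply] at *
        positivity
    · have hdec : y t - xk = (1-t)•(x1 - xk) + t•(x2 - xk) := by
        funext i
        simp only [hy, Pi.add_apply, Pi.sub_apply, Pi.smul_apply, smul_eq_mul]
        ring
      rw [hdec]
      calc ‖(1-t)•(x1 - xk) + t•(x2 - xk)‖
          ≤ ‖(1-t)•(x1 - xk)‖ + ‖t•(x2 - xk)‖ := norm_add_le _ _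
        _ = (1-t)*‖x1 - xk‖ + t*‖x2 - xk‖ := by
            rw [norm_smul, norm_smul, Real.norm_of_nonneg h1t,
              Real.norm_of_nonneg ht0]
        _ ≤ (1-t)*Δ1 + t*Δ1 := by
            have h2' : ‖x2 - xk‖ ≤ Δ1 := le_trans hx2n hΔ
            gcongr
        _ = Δ1 := by ring
  -- for small t > 0, the full model equals the active model at y t
  have hev : ∀ᶠ t in 𝓝 (0:ℝ), ∀ j,
      (cuts1 j).sup' (h1 j) (fun ab => dotp ab.1 (y t) + ab.2) ≤
      (act j).sup' (hane j) (fun ab => dotp ab.1 (y t) + ab.2) := by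
    rw [Filter.eventually_all]
    intro j
    obtain ⟨a0, ha0⟩ := hane j
    have ha0v : dotp a0.1 x1 + a0.2 = M j := (Finset.mem_filter.1 ha0).2
    have hc : ∀ (p : (Fin n → ℝ) × ℝ),
        Continuous (fun t : ℝ => dotp p.1 (y t) + p.2) := by
      intro p
      have hrw : (fun t : ℝ => dotp p.1 (y t) + p.2)
          = fun t => (1-t)*(dotp p.1 x1) + t*(dotp p.1 x2) + p.2 := by
        funext t
        rw [hy]
        simp only
        rw [dotp_combo]
      rw [hrw]
      fun_prop
    have key : ∀ ab ∈ cuts1 j, ∀ᶠ t in 𝓝 (0:ℝ),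
        dotp ab.1 (y t) + ab.2 ≤
        (act j).sup' (hane j) (fun ab => dotp ab.1 (y t) + ab.2) := by
      intro ab hab
      by_cases hA : dotp ab.1 x1 + ab.2 = M j
      · exact Filter.Eventually.of_forall
          (fun t => Finset.le_sup' (fun ab => dotp ab.1 (y t) + ab.2) (Finset.mem_filter.2 ⟨hab, hA⟩))
      · have hlt : dotp ab.1 x1 + ab.2 < M j :=
          lt_of_le_of_ne (Finset.le_sup' (fun ab => dotp ab.1 x1 + ab.2) hab) hA
        have h0 : dotp ab.1 (y 0) + ab.2 < dotp a0.1 (y 0) + a0.2 := by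
          have hy0 : y 0 = x1 := by
            funext i
            simp [hy]
          rw [hy0, ha0v]; exact hlt
        have hev1 := (hc ab).continuousAt.eventually_lt (hc a0).continuousAt h0
        exact hev1.mono (fun t ht => le_trans ht.le (Finset.le_sup' (fun ab => dotp ab.1 (y t) + ab.2) ha0))
    have := (Filter.eventually_all_finset (cuts1 j)).2 key
    exact this.mono (fun t ht => Finset.sup'_le _ _ (fun ab hab => ht ab hab))
  -- pick such a t in (0,1)
  have hIoo : Set.Ioo (0:ℝ) 1 ∈ 𝓝[>] (0:ℝ) :=
    Ioo_mem_nhdsGT_of_mem ⟨le_refl _, zero_lt_one⟩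
  have hev' := (hev.filter_mono nhdsWithin_le_nhds).and
    (Filter.eventually_of_mem hIoo (fun t ht => ht))
  obtain ⟨t, htprop, ht0, ht1⟩ := hev'.exists
  have h1t : (0:ℝ) ≤ 1 - t := by linarith
  -- chain of inequalities
  have c1 : m1 x1 ≤ m1 (y t) := hx1 (hyS t ⟨ht0.le, ht1.le⟩)
  have c2 : m1 (y t) ≤ mh (y t) := by
    rw [hm1]
    show _ ≤ dotp c (y t) + ∑ j, (act j).sup' (hane j) (fun ab => dotp ab.1 (y t) + ab.2)
    exact add_le_add_right (Finset.sum_le_sum (fun j _ => htprop j)) _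
  have c3 : mh (y t) ≤ (1-t) * mh x1 + t * mh x2 := by
    show dotp c (y t) + ∑ j, (act j).sup' (hane j) (fun ab => dotp ab.1 (y t) + ab.2) ≤
      (1-t) * (dotp c x1 + ∑ j, (act j).sup' (hane j) (fun ab => dotp ab.1 x1 + ab.2))
      + t * (dotp c x2 + ∑ j, (act j).sup' (hane j) (fun ab => dotp ab.1 x2 + ab.2))
    have hd : dotp c (y t) = (1-t)*dotp c x1 + t*dotp c x2 := dotp_combo _ _ _ _
    have hs : ∀ j, (act j).sup' (hane j) (fun ab => dotp ab.1 (y t) + ab.2) ≤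
        (1-t) * (act j).sup' (hane j) (fun ab => dotp ab.1 x1 + ab.2)
        + t * (act j).sup' (hane j) (fun ab => dotp ab.1 x2 + ab.2) := by
      intro j
      apply Finset.sup'_le
      intro ab hab
      have he : dotp ab.1 (y t) + ab.2
          = (1-t)*(dotp ab.1 x1 + ab.2) + t*(dotp ab.1 x2 + ab.2) := by
        rw [hy]
        simp only
        rw [dotp_combo]
        ring
      rw [he]
      gcongr <;> exact Finset.le_sup' (fun ab => dotp ab.1 _ + ab.2) hab
    calc dotp c (y t) + ∑ j, (act j).sup' (hane j) (fun ab => dotp ab.1 (y t) + ab.2)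
        ≤ ((1-t)*dotp c x1 + t*dotp c x2) +
          ∑ j, ((1-t) * (act j).sup' (hane j) (fun ab => dotp ab.1 x1 + ab.2)
          + t * (act j).sup' (hane j) (fun ab => dotp ab.1 x2 + ab.2)) := by
          rw [hd]
          exact add_le_add_right (Finset.sum_le_sum (fun j _ => hs j)) _
      _ = (1-t) * (dotp c x1 + ∑ j, (act j).sup' (hane j) (fun ab => dotp ab.1 x1 + ab.2))
          + t * (dotp c x2 + ∑ j, (act j).sup' (hane j) (fun ab => dotp ab.1 x2 + ab.2)) := by
          rw [Finset.sum_add_distrib, ← Finset.mul_sum, ← Finset.mul_sum]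
          ring
  have c4 : mh x2 ≤ m2 x2 := hle2 x2
  have : m1 x1 ≤ (1-t) * m1 x1 + t * mh x2 := by
    rw [← hEq1] at *
    linarith [le_trans c1 (le_trans c2 c3)]
  nlinarith [c4, ht0, this]
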